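/- Let (X_i)_{i≥1} be i.i.d. random vectors in ℝ^d with law μ_T supported in a compact set, let Φ : ℝ^d → ℝ^p be bounded measurable, and let v : ℝ^k × ℝ^d → ℝ, (θ, x) ↦ v_θ(x), be measurable, bounded, and differentiable in θ with uniformly bounded partial derivative ∂_θ v_θ(x). Let (N_n) be sample sizes with n/N_n bounded, and let θ̂_n be random vectors such that θ̂_n → θ̄ in probability and √n(θ̂_n − θ̄) is bounded in probability. Assume E_T[v_θ̄(X)] ≠ 0. Define ĉ_n = (N_n⁻¹ Σ_{i≤N_n} Φ(X_i) v_{θ̂_n}(X_i)) / (N_n⁻¹ Σ_{i≤N_n} v_{θ̂_n}(X_i)) and c = E_T[Φ(X) v_θ̄(X)] / E_T[v_θ̄(X)]. Then √n(ĉ_n − c) is bounded in probability; equivalently, Ψ̂_n − Ψ = O_p(n^{−1/2}), where Ψ̂_n(x) = Φ(x) − ĉ_n and Ψ(x) = Φ(x) − c. -/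

import Mathlib

open MeasureTheory ProbabilityTheory Filter
open scoped Matrix

/-- `Z n = O_p(1)`: for every `ε > 0` there is `M > 0` such that
`P(‖Z n‖ > M) < ε` for all sufficiently large `n`. -/
def BoundedInProb {Ω E : Type*} [MeasurableSpace Ω] [Norm E]
    (P : Measure Ω) (Z : ℕ → Ω → E) : Prop :=
  ∀ ε : ℝ, 0 < ε → ∃ M : ℝ, 0 < M ∧
    ∀ᶠ n in atTop, (P {ω | M < ‖Z n ω‖}).toReal < ε


/-- A bound `K/M² < ε` is achievable for large `M`. -/
lemma exists_M_sq (K ε : ℝ) (hK : 0 ≤ K) (hε : 0 < ε) :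
    ∃ M : ℝ, 0 < M ∧ K / M ^ 2 < ε := by
  refine ⟨Real.sqrt (K / ε) + 1, by positivity, ?_⟩
  have h1 : Real.sqrt (K / ε) ^ 2 = K / ε := Real.sq_sqrt (by positivity)
  have h2 : K / ε < (Real.sqrt (K / ε) + 1) ^ 2 := by nlinarith [Real.sqrt_nonneg (K / ε)]
  rw [div_lt_iff₀ (by positivity)]
  rw [div_lt_iff₀ hε] at h2
  nlinarith [Real.sqrt_nonneg (K / ε)]

/-- Chebyshev bound for the deviation of the empirical mean of a bounded
measurable function of i.i.d. samples. -/
lemma emp_cheb {Ω : Type} [MeasurableSpace Ω] (P : Measure Ω) [IsProbabilityMeasure P]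
    {d : ℕ} (μT : Measure (Fin d → ℝ)) [IsProbabilityMeasure μT]
    (X : ℕ → Ω → (Fin d → ℝ)) (hXm : ∀ i, Measurable (X i))
    (hX_iid : iIndepFun X P)
    (hX_law : ∀ i, P.map (X i) = μT)
    (g : (Fin d → ℝ) → ℝ) (hg : Measurable g) (B : ℝ) (hB : ∀ x, |g x| ≤ B)
    {N : ℕ} (hN : 0 < N) {t : ℝ} (ht : 0 < t) :
    (P {ω | t ≤ |(N : ℝ)⁻¹ * ∑ j ∈ Finset.range N, g (X j ω) - ∫ x, g x ∂μT|}).toReal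
      ≤ B ^ 2 / (N * t ^ 2) := by
  set Y : ℕ → Ω → ℝ := fun j => g ∘ X j with hY
  have hYm : ∀ j, Measurable (Y j) := fun j => hg.comp (hXm j)
  have hY2 : ∀ j, MemLp (Y j) 2 P := fun j =>
    MemLp.of_bound (hYm j).aestronglyMeasurable B
      (Filter.Eventually.of_forall fun ω => by simpa [Y] using hB (X j ω))
  have hmean : ∀ j, ∫ ω, Y j ω ∂P = ∫ x, g x ∂μT := by
    intro j
    rw [← hX_law j, integral_map (hXm j).aemeasurable]
    · rfl
    · rw [hX_law j]; exact hg.aestronglyMeasurable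
  set m : ℝ := ∫ x, g x ∂μT with hm
  set T : Ω → ℝ := ∑ j ∈ Finset.range N, Y j with hT
  have hT2 : MemLp T 2 P := memLp_finset_sum' _ fun j _ => hY2 j
  have hTapp : ∀ ω, T ω = ∑ j ∈ Finset.range N, Y j ω := fun ω => by
    simp [T, Finset.sum_apply]
  have hTmean : ∫ ω, T ω ∂P = N * m := by
    simp only [hTapp]
    rw [integral_finset_sum _ fun j _ => (hY2 j).integrable one_le_two]
    simp [hmean, Finset.sum_const]
  -- variance of each term
  have hvar : ∀ j, variance (Y j) P ≤ B ^ 2 := by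
    intro j
    rw [variance_eq_sub (hY2 j)]
    have hsq : ∫ ω, (Y j ^ 2) ω ∂P ≤ B ^ 2 := by
      have : ∀ ω, (Y j ^ 2) ω ≤ B ^ 2 := by
        intro ω
        have := hB (X j ω)
        have h0 : (Y j ^ 2) ω = (Y j ω) ^ 2 := rfl
        rw [h0]
        have h1 : Y j ω = g (X j ω) := rfl
        rw [h1]
        have h2 := abs_le.mp this
        nlinarith [h2.1, h2.2]
      calc ∫ ω, (Y j ^ 2) ω ∂P ≤ ∫ _ω, B ^ 2 ∂P :=
            integral_mono ((hY2 j).integrable_sq) (integrable_const _) this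
        _ = B ^ 2 := by simp
    nlinarith [sq_nonneg (∫ ω, Y j ω ∂P)]
  have hvarT : variance T P ≤ N * B ^ 2 := by
    rw [hT, IndepFun.variance_sum (fun j _ => hY2 j)
      (fun i _ j _ hij => (hX_iid.indepFun hij).comp hg hg)]
    calc ∑ j ∈ Finset.range N, variance (Y j) P ≤ ∑ _j ∈ Finset.range N, B ^ 2 :=
          Finset.sum_le_sum fun j _ => hvar j
      _ = N * B ^ 2 := by simp [mul_comm]
  -- Chebyshev
  have hc : (0 : ℝ) < N * t := by positivity
  have hcheb := meas_ge_le_variance_div_sq (μ := P) hT2 hc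
  have hsub : {ω | t ≤ |(N : ℝ)⁻¹ * ∑ j ∈ Finset.range N, g (X j ω) - m|}
      ⊆ {ω | (N : ℝ) * t ≤ |T ω - ∫ x, T x ∂P|} := by
    intro ω hω
    simp only [Set.mem_setOf_eq] at hω ⊢
    rw [hTmean, hTapp]
    have hNne : (N : ℝ) ≠ 0 := by positivity
    have : (∑ j ∈ Finset.range N, Y j ω) - N * m
        = (N : ℝ) * ((N : ℝ)⁻¹ * ∑ j ∈ Finset.range N, g (X j ω) - m) := by
      field_simp
      ring_nf
      rw [sub_eq_neg_add]; rfl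
    rw [this, abs_mul, abs_of_nonneg (by positivity : (0:ℝ) ≤ (N:ℝ))]
    exact mul_le_mul_of_nonneg_left hω (by positivity)
  have hfin : P {ω | t ≤ |(N : ℝ)⁻¹ * ∑ j ∈ Finset.range N, g (X j ω) - m|}
      ≤ ENNReal.ofReal (B ^ 2 / (N * t ^ 2)) := by
    refine le_trans (measure_mono hsub) (le_trans hcheb (ENNReal.ofReal_le_ofReal ?_))
    rw [div_le_div_iff₀ (by positivity) (by positivity)]
    have : ((N : ℝ) * t) ^ 2 = (N : ℝ) * ((N:ℝ) * t ^ 2) := by ring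
    nlinarith [variance_nonneg T P, sq_nonneg t, (Nat.cast_pos.mpr hN : (0:ℝ) < (N:ℝ))]
  exact ENNReal.toReal_le_of_le_ofReal (by positivity) hfin


/-- Algebraic estimate on the ratio difference. -/
lemma key_alg {p : ℕ} {S s : ℝ} (A a : Fin p → ℝ) (hs : s ≠ 0) (hS : |s| / 2 ≤ |S|) :
    ‖S⁻¹ • A - s⁻¹ • a‖ ≤ 2 / |s| * ‖A - a‖ + 2 / s ^ 2 * (|S - s| * ‖a‖) := by
  have hs0 : 0 < |s| := abs_pos.mpr hs
  have hS0 : S ≠ 0 := by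
    intro h; rw [h, abs_zero] at hS; linarith
  have hSpos : 0 < |S| := abs_pos.mpr hS0
  have hinv : (S⁻¹ : ℝ) - s⁻¹ = (s - S) * (S⁻¹ * s⁻¹) := by field_simp
  have hdecomp : S⁻¹ • A - s⁻¹ • a = S⁻¹ • (A - a) + ((s - S) * (S⁻¹ * s⁻¹)) • a := by
    rw [← hinv, smul_sub, sub_smul]; abel
  rw [hdecomp]
  have h1 : ‖S⁻¹ • (A - a)‖ ≤ 2 / |s| * ‖A - a‖ := by
    rw [norm_smul, Real.norm_eq_abs, abs_inv]
    have : |S|⁻¹ ≤ 2 / |s| := by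
      rw [inv_le_iff_one_le_mul₀ hSpos]
      rw [div_mul_eq_mul_div, le_div_iff₀ hs0]
      linarith
    exact mul_le_mul_of_nonneg_right this (norm_nonneg _)
  have h2 : ‖((s - S) * (S⁻¹ * s⁻¹)) • a‖ ≤ 2 / s ^ 2 * (|S - s| * ‖a‖) := by
    rw [norm_smul, Real.norm_eq_abs, abs_mul, abs_mul, abs_inv, abs_inv]
    have hss : |s - S| = |S - s| := abs_sub_comm s S
    rw [hss]
    have hb : |S|⁻¹ * |s|⁻¹ ≤ 2 / s ^ 2 := by
      have h3 : |s| / 2 ≤ |S| := hS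
      have h4 : |S|⁻¹ ≤ 2 / |s| := by
        rw [inv_le_iff_one_le_mul₀ hSpos, div_mul_eq_mul_div, le_div_iff₀ hs0]; linarith
      have h5 : |S|⁻¹ * |s|⁻¹ ≤ (2 / |s|) * |s|⁻¹ :=
        mul_le_mul_of_nonneg_right h4 (by positivity)
      have h6 : (2 / |s|) * |s|⁻¹ = 2 / s ^ 2 := by
        have habs : |s| * |s| = s ^ 2 := by
          rw [← abs_mul, abs_of_nonneg (by nlinarith [sq_nonneg s] : (0:ℝ) ≤ s * s), sq]
        field_simp
        nlinarith [habs]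
      linarith
    calc |S - s| * (|S|⁻¹ * |s|⁻¹) * ‖a‖ ≤ |S - s| * (2 / s ^ 2) * ‖a‖ := by
          have := mul_le_mul_of_nonneg_left hb (abs_nonneg (S - s))
          exact mul_le_mul_of_nonneg_right this (norm_nonneg _)
      _ = 2 / s ^ 2 * (|S - s| * ‖a‖) := by ring
  calc ‖S⁻¹ • (A - a) + ((s - S) * (S⁻¹ * s⁻¹)) • a‖
      ≤ ‖S⁻¹ • (A - a)‖ + ‖((s - S) * (S⁻¹ * s⁻¹)) • a‖ := norm_add_le _ _
    _ ≤ 2 / |s| * ‖A - a‖ + 2 / s ^ 2 * (|S - s| * ‖a‖) := add_le_add h1 h2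


/-- Average of uniformly close sequences stays close. -/
lemma avg_norm_sub {E : Type*} [NormedAddCommGroup E] [NormedSpace ℝ E]
    {N : ℕ} (hN : 0 < N) (f g : ℕ → E) (C : ℝ) (h : ∀ j, ‖f j - g j‖ ≤ C) :
    ‖(N : ℝ)⁻¹ • ∑ j ∈ Finset.range N, f j - (N : ℝ)⁻¹ • ∑ j ∈ Finset.range N, g j‖ ≤ C := by
  have hC : 0 ≤ C := le_trans (norm_nonneg _) (h 0)
  rw [← smul_sub, ← Finset.sum_sub_distrib, norm_smul, Real.norm_eq_abs, abs_inv,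
    Nat.abs_cast]
  have h1 : ‖∑ j ∈ Finset.range N, (f j - g j)‖ ≤ N * C := by
    refine le_trans (norm_sum_le _ _) ?_
    calc ∑ j ∈ Finset.range N, ‖f j - g j‖ ≤ ∑ _j ∈ Finset.range N, C :=
          Finset.sum_le_sum fun j _ => h j
      _ = N * C := by simp [mul_comm]
  have hNpos : (0 : ℝ) < N := by exact_mod_cast hN
  calc (N : ℝ)⁻¹ * ‖∑ j ∈ Finset.range N, (f j - g j)‖ ≤ (N : ℝ)⁻¹ * ((N : ℝ) * C) := by
        exact mul_le_mul_of_nonneg_left h1 (by positivity)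
    _ = C := by field_simp
set_option maxHeartbeats 2000000 in
/-- **Lemma B2: `√n`-rate of the estimated calibration constant.**
If `(X_i)` are i.i.d. `~ μT` with compact support, `Φ` is bounded measurable, `v_θ(x)` is
measurable, bounded, differentiable in `θ` with uniformly bounded derivative, `n/N_n` is
bounded, `θ̂_n → θ̄` in probability with `√n(θ̂_n − θ̄) = O_p(1)`, and `E_T[v_θ̄(X)] ≠ 0`,
then `√n(ĉ_n − c) = O_p(1)`, i.e. `Ψ̂_n − Ψ = O_p(n^{−1/2})`. -/
theorem calibration_constant_root_n_rate
    (d p k : ℕ) (Ω : Type) [MeasurableSpace Ω] (P : Measure Ω) [IsProbabilityMeasure P]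
    (μT : Measure (Fin d → ℝ)) [IsProbabilityMeasure μT]
    (K : Set (Fin d → ℝ)) (hK : IsCompact K) (hμTK : μT Kᶜ = 0)
    (X : ℕ → Ω → (Fin d → ℝ)) (hXm : ∀ i, Measurable (X i))
    (hX_iid : iIndepFun X P)
    (hX_law : ∀ i, P.map (X i) = μT)
    (Φ : (Fin d → ℝ) → (Fin p → ℝ)) (hΦm : Measurable Φ)
    (hΦbd : ∃ C : ℝ, ∀ x, ‖Φ x‖ ≤ C)
    (v : (Fin k → ℝ) → (Fin d → ℝ) → ℝ)
    (hvm : Measurable (fun q : (Fin k → ℝ) × (Fin d → ℝ) => v q.1 q.2))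
    (hvbd : ∃ C : ℝ, ∀ θ x, |v θ x| ≤ C)
    (hvdiff : ∀ x, Differentiable ℝ (fun θ => v θ x))
    (hvderiv_bd : ∃ C : ℝ, ∀ θ x, ‖fderiv ℝ (fun θ' => v θ' x) θ‖ ≤ C)
    (Nn : ℕ → ℕ) (hNpos : ∀ n, 0 < Nn n)
    (hNbd : ∃ C : ℝ, ∀ n : ℕ, (n : ℝ) ≤ C * (Nn n : ℝ))
    (θhat : ℕ → Ω → (Fin k → ℝ)) (hθm : ∀ n, Measurable (θhat n))
    (θbar : Fin k → ℝ)
    (hθ_consistent : TendstoInMeasure P θhat atTop (fun _ => θbar))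
    (hθ_rate : BoundedInProb P (fun n ω => Real.sqrt n • (θhat n ω - θbar)))
    (hv_ne : ∫ x, v θbar x ∂μT ≠ 0)
    (chat : ℕ → Ω → (Fin p → ℝ))
    (hchat : chat = fun n ω =>
      (((Nn n : ℝ))⁻¹ * ∑ j ∈ Finset.range (Nn n), v (θhat n ω) (X j ω))⁻¹ •
        (((Nn n : ℝ))⁻¹ • ∑ j ∈ Finset.range (Nn n), v (θhat n ω) (X j ω) • Φ (X j ω)))
    (c : Fin p → ℝ)
    (hc : c = (∫ x, v θbar x ∂μT)⁻¹ • (∫ x, v θbar x • Φ x ∂μT)) :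
    BoundedInProb P (fun n ω => Real.sqrt n • (chat n ω - c)) := by  classical
  subst hchat
  subst hc
  obtain ⟨Cφ₀, hCφ₀⟩ := hΦbd
  obtain ⟨Cv₀, hCv₀⟩ := hvbd
  obtain ⟨Cd₀, hCd₀⟩ := hvderiv_bd
  obtain ⟨CN₀, hCN₀⟩ := hNbd
  set Cφ := max Cφ₀ 0 with hCφdef
  set Cv := max Cv₀ 0 with hCvdef
  set Cd := max Cd₀ 0 with hCddef
  set CN := max CN₀ 1 with hCNdef
  have hCφ : ∀ x, ‖Φ x‖ ≤ Cφ := fun x => le_trans (hCφ₀ x) (le_max_left _ _)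
  have hCv : ∀ θ x, |v θ x| ≤ Cv := fun θ x => le_trans (hCv₀ θ x) (le_max_left _ _)
  have hCd : ∀ θ x, ‖fderiv ℝ (fun θ' => v θ' x) θ‖ ≤ Cd :=
    fun θ x => le_trans (hCd₀ θ x) (le_max_left _ _)
  have hCN : ∀ n : ℕ, (n : ℝ) ≤ CN * (Nn n : ℝ) := fun n =>
    le_trans (hCN₀ n) (mul_le_mul_of_nonneg_right (le_max_left _ _) (Nat.cast_nonneg _))
  have hCφnn : 0 ≤ Cφ := le_max_right _ _
  have hCvnn : 0 ≤ Cv := le_max_right _ _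
  have hCdnn : 0 ≤ Cd := le_max_right _ _
  have hCNpos : (0 : ℝ) < CN := lt_of_lt_of_le one_pos (le_max_right _ _)
  -- Lipschitz continuity of `v` in `θ`
  have vlip : ∀ (θ₁ θ₂ : Fin k → ℝ) (x : Fin d → ℝ), |v θ₁ x - v θ₂ x| ≤ Cd * ‖θ₁ - θ₂‖ := by
    intro θ₁ θ₂ x
    have := Convex.norm_image_sub_le_of_norm_fderiv_le
      (f := fun θ => v θ x) (s := Set.univ)
      (fun y _ => (hvdiff x).differentiableAt) (fun y _ => hCd y x) convex_univ
      (Set.mem_univ θ₂) (Set.mem_univ θ₁)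
    simpa [Real.norm_eq_abs] using this
  have hvθm : Measurable (fun x => v θbar x) :=
    hvm.comp (measurable_const.prodMk measurable_id)
  set s : ℝ := ∫ x, v θbar x ∂μT with hsdef
  set a : Fin p → ℝ := ∫ x, v θbar x • Φ x ∂μT with hadef
  have hsabs : 0 < |s| := abs_pos.mpr hv_ne
  have hfa_m : Measurable (fun x => v θbar x • Φ x) := hvθm.smul hΦm
  have hfa_int : Integrable (fun x => v θbar x • Φ x) μT := by
    refine memLp_one_iff_integrable.mp (MemLp.of_bound hfa_m.aestronglyMeasurable (Cv * Cφ)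
      (Filter.Eventually.of_forall fun x => ?_))
    rw [norm_smul, Real.norm_eq_abs]
    exact mul_le_mul (hCv _ _) (hCφ _) (norm_nonneg _) hCvnn
  have hai : ∀ i, a i = ∫ x, v θbar x * Φ x i ∂μT := by
    intro i
    have h := (ContinuousLinearMap.proj (R := ℝ) (φ := fun _ : Fin p => ℝ) i).integral_comp_comm
      hfa_int
    simp only [ContinuousLinearMap.proj_apply, Pi.smul_apply, smul_eq_mul] at h
    rw [hadef]
    exact h.symm
  -- start the O_p argument
  intro ε hε
  obtain ⟨M₀, hM₀pos, hev₀⟩ := hθ_rate (ε / 3) (by positivity)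
  obtain ⟨M₁, hM₁pos, hM₁⟩ := exists_M_sq (Cv ^ 2 * CN) (ε / 3) (by positivity) (by positivity)
  obtain ⟨M₂, hM₂pos, hM₂⟩ := exists_M_sq ((p : ℝ) * ((Cv * Cφ) ^ 2 * CN)) (ε / 3)
    (by positivity) (by positivity)
  set M : ℝ := 2 / |s| * (Cd * Cφ * M₀ + M₂) + 2 / s ^ 2 * ((Cd * M₀ + M₁) * ‖a‖) + 1 with hMdef
  have hMterms₁ : 0 ≤ 2 / |s| * (Cd * Cφ * M₀ + M₂) := by
    apply mul_nonneg (by positivity)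
    have : 0 ≤ Cd * Cφ * M₀ := mul_nonneg (mul_nonneg hCdnn hCφnn) hM₀pos.le
    linarith
  have hMterms₂ : 0 ≤ 2 / s ^ 2 * ((Cd * M₀ + M₁) * ‖a‖) := by
    apply mul_nonneg (by positivity)
    apply mul_nonneg _ (norm_nonneg _)
    have : 0 ≤ Cd * M₀ := mul_nonneg hCdnn hM₀pos.le
    linarith
  have hMpos : 0 < M := by rw [hMdef]; linarith
  refine ⟨M, hMpos, ?_⟩
  set q : ℝ := 2 * (Cd * M₀ + M₁) / |s| with hqdef
  have hCdM : 0 ≤ Cd * M₀ := mul_nonneg hCdnn hM₀pos.le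
  have hqnn : 0 ≤ q := by
    apply div_nonneg _ hsabs.le
    linarith
  set n₀ : ℕ := ⌈q ^ 2⌉₊ + 1 with hn₀def
  filter_upwards [hev₀, eventually_ge_atTop 1, eventually_ge_atTop n₀] with n h₀ hn1 hn0
  -- per-`n` quantities
  have hn1' : (1 : ℝ) ≤ (n : ℝ) := by exact_mod_cast hn1
  set sqn : ℝ := Real.sqrt n with hsqndef
  have hsqpos : 0 < sqn := Real.sqrt_pos.mpr (by positivity)
  have hsqsq : sqn ^ 2 = n := Real.sq_sqrt (by positivity)
  have hsqge : q ≤ sqn := by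
    have h1 : q ^ 2 ≤ (n : ℝ) := by
      have h2 : (n₀ : ℝ) ≤ n := by exact_mod_cast hn0
      have h3 : (⌈q ^ 2⌉₊ : ℝ) ≤ n₀ := by
        rw [hn₀def]; push_cast; linarith
      exact le_trans (Nat.le_ceil _) (le_trans h3 h2)
    calc q = Real.sqrt (q ^ 2) := (Real.sqrt_sq hqnn).symm
      _ ≤ sqn := Real.sqrt_le_sqrt h1
  set N := Nn n with hNdef
  have hNpos' : 0 < N := hNpos n
  have hNR : (0 : ℝ) < N := by exact_mod_cast hNpos'
  have hnN : (n : ℝ) ≤ CN * N := hCN n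
  -- events
  set E0 : Set Ω := {ω | M₀ < ‖sqn • (θhat n ω - θbar)‖} with hE0def
  set E1 : Set Ω := {ω | M₁ / sqn ≤
    |(N : ℝ)⁻¹ * ∑ j ∈ Finset.range N, v θbar (X j ω) - s|} with hE1def
  set E2 : Fin p → Set Ω := fun i => {ω | M₂ / sqn ≤
    |(N : ℝ)⁻¹ * ∑ j ∈ Finset.range N, v θbar (X j ω) * Φ (X j ω) i
      - ∫ x, v θbar x * Φ x i ∂μT|} with hE2def
  have ht₁ : 0 < M₁ / sqn := by positivity
  have ht₂ : 0 < M₂ / sqn := by positivity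
  -- Chebyshev bound on E1
  have hE1bd : (P E1).toReal < ε / 3 := by
    have h := emp_cheb P μT X hXm hX_iid hX_law (fun x => v θbar x) hvθm Cv
      (fun x => hCv θbar x) hNpos' ht₁
    refine lt_of_le_of_lt (le_trans h ?_) hM₁
    have hdiv : (M₁ / sqn) ^ 2 = M₁ ^ 2 / (n : ℝ) := by rw [div_pow, hsqsq]
    rw [hdiv, div_le_div_iff₀ (by positivity) (by positivity)]
    have h2 : (n : ℝ) * (Cv ^ 2 * M₁ ^ 2)
        ≤ (n : ℝ) * (Cv ^ 2 * CN * ((N : ℝ) * (M₁ ^ 2 / n))) := by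
      have h3 : (n : ℝ) * (Cv ^ 2 * CN * ((N : ℝ) * (M₁ ^ 2 / n)))
          = Cv ^ 2 * (CN * N) * M₁ ^ 2 := by field_simp
      rw [h3]
      nlinarith [mul_le_mul_of_nonneg_right hnN (mul_nonneg (sq_nonneg Cv) (sq_nonneg M₁))]
    exact le_of_mul_le_mul_left h2 (by positivity)
  -- Chebyshev bound on each E2 i and on their union
  have hE2bd : (P (⋃ i, E2 i)).toReal < ε / 3 := by
    have hone : ∀ i, (P (E2 i)).toReal ≤ (Cv * Cφ) ^ 2 * CN / M₂ ^ 2 := by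
      intro i
      have hgm : Measurable (fun x => v θbar x * Φ x i) :=
        hvθm.mul ((measurable_pi_apply i).comp hΦm)
      have hgb : ∀ x, |v θbar x * Φ x i| ≤ Cv * Cφ := by
        intro x
        rw [abs_mul]
        have h1 : |Φ x i| ≤ ‖Φ x‖ := by
          simpa [Real.norm_eq_abs] using norm_le_pi_norm (Φ x) i
        exact mul_le_mul (hCv _ _) (le_trans h1 (hCφ x)) (abs_nonneg _) hCvnn
      have h := emp_cheb P μT X hXm hX_iid hX_law (fun x => v θbar x * Φ x i) hgm (Cv * Cφ)
        hgb hNpos' ht₂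
      refine le_trans h ?_
      have hdiv : (M₂ / sqn) ^ 2 = M₂ ^ 2 / (n : ℝ) := by rw [div_pow, hsqsq]
      rw [hdiv, div_le_div_iff₀ (by positivity) (by positivity)]
      have h2 : (n : ℝ) * ((Cv * Cφ) ^ 2 * M₂ ^ 2)
          ≤ (n : ℝ) * ((Cv * Cφ) ^ 2 * CN * ((N : ℝ) * (M₂ ^ 2 / n))) := by
        have h3 : (n : ℝ) * ((Cv * Cφ) ^ 2 * CN * ((N : ℝ) * (M₂ ^ 2 / n)))
            = (Cv * Cφ) ^ 2 * (CN * N) * M₂ ^ 2 := by field_simp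
        rw [h3]
        nlinarith [mul_le_mul_of_nonneg_right hnN
          (mul_nonneg (sq_nonneg (Cv * Cφ)) (sq_nonneg M₂))]
      exact le_of_mul_le_mul_left h2 (by positivity)
    have hU : P (⋃ i, E2 i) ≤ ∑ i : Fin p, P (E2 i) := by
      refine le_trans (measure_iUnion_le _) ?_
      rw [tsum_fintype]
    have hU' : (P (⋃ i, E2 i)).toReal ≤ ∑ i : Fin p, (P (E2 i)).toReal := by
      refine le_trans (ENNReal.toReal_mono ?_ hU) (le_of_eq (ENNReal.toReal_sum ?_))
      · exact (ENNReal.sum_lt_top.mpr fun i _ => measure_lt_top P _).ne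
      · exact fun i _ => measure_ne_top P _
    have hsum : ∑ i : Fin p, (P (E2 i)).toReal ≤ (p : ℝ) * ((Cv * Cφ) ^ 2 * CN / M₂ ^ 2) := by
      calc ∑ i : Fin p, (P (E2 i)).toReal ≤ ∑ _i : Fin p, (Cv * Cφ) ^ 2 * CN / M₂ ^ 2 :=
            Finset.sum_le_sum fun i _ => hone i
        _ = (p : ℝ) * ((Cv * Cφ) ^ 2 * CN / M₂ ^ 2) := by
            simp [Finset.sum_const, mul_comm]
    have hfin : (p : ℝ) * ((Cv * Cφ) ^ 2 * CN / M₂ ^ 2)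
        = (p : ℝ) * ((Cv * Cφ) ^ 2 * CN) / M₂ ^ 2 := by ring
    linarith [hM₂, hU', hsum, hfin ▸ hsum]
  -- inclusion of the deviation event
  have hsub : {ω | M < ‖sqn • ((((N : ℝ))⁻¹ * ∑ j ∈ Finset.range N, v (θhat n ω) (X j ω))⁻¹ •
        (((N : ℝ))⁻¹ • ∑ j ∈ Finset.range N, v (θhat n ω) (X j ω) • Φ (X j ω)) - s⁻¹ • a)‖}
      ⊆ (E0 ∪ E1) ∪ ⋃ i, E2 i := by
    intro ω hω
    simp only [Set.mem_setOf_eq] at hω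
    by_contra hcon
    simp only [Set.mem_union, Set.mem_iUnion, not_or, not_exists, hE0def, hE1def, hE2def,
      Set.mem_setOf_eq] at hcon
    obtain ⟨⟨h0', h1'⟩, h2'⟩ := hcon
    -- abbreviations
    set Sω : ℝ := (N : ℝ)⁻¹ * ∑ j ∈ Finset.range N, v (θhat n ω) (X j ω) with hSωdef
    set S'ω : ℝ := (N : ℝ)⁻¹ * ∑ j ∈ Finset.range N, v θbar (X j ω) with hS'ωdef
    set Aω : Fin p → ℝ :=
      (N : ℝ)⁻¹ • ∑ j ∈ Finset.range N, v (θhat n ω) (X j ω) • Φ (X j ω) with hAωdef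
    set A'ω : Fin p → ℝ :=
      (N : ℝ)⁻¹ • ∑ j ∈ Finset.range N, v θbar (X j ω) • Φ (X j ω) with hA'ωdef
    -- consequences of being outside the bad events
    have hΔ : ‖θhat n ω - θbar‖ ≤ M₀ / sqn := by
      have h := not_lt.mp h0'
      rw [norm_smul, Real.norm_eq_abs, abs_of_nonneg hsqpos.le] at h
      rw [le_div_iff₀ hsqpos]
      linarith [h, mul_comm sqn ‖θhat n ω - θbar‖]
    have hS' : |S'ω - s| < M₁ / sqn := not_le.mp h1'
    -- Lipschitz transfer on the empirical sums
    have hterm : ∀ j : ℕ, |v (θhat n ω) (X j ω) - v θbar (X j ω)| ≤ Cd * (M₀ / sqn) :=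
      fun j => le_trans (vlip _ _ _) (mul_le_mul_of_nonneg_left hΔ hCdnn)
    have hSS' : |Sω - S'ω| ≤ Cd * (M₀ / sqn) := by
      have h := avg_norm_sub hNpos' (fun j => v (θhat n ω) (X j ω))
        (fun j => v θbar (X j ω)) (Cd * (M₀ / sqn))
        (fun j => by simpa [Real.norm_eq_abs] using hterm j)
      simpa [Real.norm_eq_abs, smul_eq_mul, hSωdef, hS'ωdef] using h
    have hAA' : ‖Aω - A'ω‖ ≤ Cd * (M₀ / sqn) * Cφ := by
      have h := avg_norm_sub hNpos' (fun j => v (θhat n ω) (X j ω) • Φ (X j ω))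
        (fun j => v θbar (X j ω) • Φ (X j ω)) (Cd * (M₀ / sqn) * Cφ)
        (fun j => by
          rw [← sub_smul, norm_smul, Real.norm_eq_abs]
          exact mul_le_mul (hterm j) (hCφ _) (norm_nonneg _)
            (mul_nonneg hCdnn (by positivity)))
      simpa [hAωdef, hA'ωdef] using h
    -- componentwise bound on A'ω - a
    have hA'a : ‖A'ω - a‖ < M₂ / sqn := by
      refine (pi_norm_lt_iff ht₂).mpr fun i => ?_
      have h2i := not_le.mp (h2' i)
      have hcomp : (A'ω - a) i = (N : ℝ)⁻¹ * ∑ j ∈ Finset.range N, v θbar (X j ω) * Φ (X j ω) i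
          - ∫ x, v θbar x * Φ x i ∂μT := by
        rw [Pi.sub_apply, hai i, hA'ωdef]
        simp [Finset.sum_apply, Finset.mul_sum]
      rw [Real.norm_eq_abs, hcomp]
      exact h2i
    -- bound on |Sω - s| and lower bound on |Sω|
    have hSs : |Sω - s| ≤ (Cd * M₀ + M₁) / sqn := by
      have htri : |Sω - s| ≤ |Sω - S'ω| + |S'ω - s| := abs_sub_le _ _ _
      have he : Cd * (M₀ / sqn) + M₁ / sqn = (Cd * M₀ + M₁) / sqn := by ring
      linarith
    have hhalf : |Sω - s| ≤ |s| / 2 := by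
      refine le_trans hSs ?_
      rw [div_le_div_iff₀ hsqpos two_pos]
      have h := mul_le_mul_of_nonneg_right hsqge hsabs.le
      rw [hqdef, div_mul_cancel₀ _ (ne_of_gt hsabs)] at h
      linarith
    have hSabs : |s| / 2 ≤ |Sω| := by
      have h := abs_sub_abs_le_abs_sub s Sω
      rw [abs_sub_comm s Sω] at h
      linarith
    -- the key algebraic estimate
    have hkey := key_alg Aω a hv_ne hSabs
    have hAa : ‖Aω - a‖ ≤ (Cd * Cφ * M₀ + M₂) / sqn := by
      have htri : ‖Aω - a‖ ≤ ‖Aω - A'ω‖ + ‖A'ω - a‖ := by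
        calc ‖Aω - a‖ = ‖(Aω - A'ω) + (A'ω - a)‖ := by rw [sub_add_sub_cancel]
          _ ≤ ‖Aω - A'ω‖ + ‖A'ω - a‖ := norm_add_le _ _
      have he : Cd * (M₀ / sqn) * Cφ + M₂ / sqn = (Cd * Cφ * M₀ + M₂) / sqn := by ring
      linarith
    -- final arithmetic contradiction
    have hb1 : 2 / |s| * ‖Aω - a‖ ≤ 2 / |s| * ((Cd * Cφ * M₀ + M₂) / sqn) :=
      mul_le_mul_of_nonneg_left hAa (by positivity)
    have hb2 : 2 / s ^ 2 * (|Sω - s| * ‖a‖)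
        ≤ 2 / s ^ 2 * ((Cd * M₀ + M₁) / sqn * ‖a‖) := by
      refine mul_le_mul_of_nonneg_left ?_ (by positivity)
      exact mul_le_mul_of_nonneg_right hSs (norm_nonneg _)
    have hmul : sqn * ‖Sω⁻¹ • Aω - s⁻¹ • a‖
        ≤ sqn * (2 / |s| * ((Cd * Cφ * M₀ + M₂) / sqn)
          + 2 / s ^ 2 * ((Cd * M₀ + M₁) / sqn * ‖a‖)) :=
      mul_le_mul_of_nonneg_left (le_trans hkey (add_le_add hb1 hb2)) hsqpos.le
    have heval : sqn * (2 / |s| * ((Cd * Cφ * M₀ + M₂) / sqn)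
          + 2 / s ^ 2 * ((Cd * M₀ + M₁) / sqn * ‖a‖)) = M - 1 := by
      rw [hMdef]
      field_simp
      ring
    have hnorm : ‖sqn • (Sω⁻¹ • Aω - s⁻¹ • a)‖ = sqn * ‖Sω⁻¹ • Aω - s⁻¹ • a‖ := by
      rw [norm_smul, Real.norm_eq_abs, abs_of_nonneg hsqpos.le]
    rw [hnorm] at hω
    linarith [hω, hmul, heval ▸ hmul]
  -- assemble the measure bound
  have hP : P {ω | M < ‖sqn • ((((N : ℝ))⁻¹ * ∑ j ∈ Finset.range N, v (θhat n ω) (X j ω))⁻¹ •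
        (((N : ℝ))⁻¹ • ∑ j ∈ Finset.range N, v (θhat n ω) (X j ω) • Φ (X j ω)) - s⁻¹ • a)‖}
      ≤ P E0 + P E1 + P (⋃ i, E2 i) :=
    calc P _ ≤ P ((E0 ∪ E1) ∪ ⋃ i, E2 i) := measure_mono hsub
      _ ≤ P (E0 ∪ E1) + P (⋃ i, E2 i) := measure_union_le _ _
      _ ≤ P E0 + P E1 + P (⋃ i, E2 i) :=
          add_le_add_left (measure_union_le _ _) _
  have htr : (P {ω | M < ‖sqn • ((((N : ℝ))⁻¹ * ∑ j ∈ Finset.range N,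
        v (θhat n ω) (X j ω))⁻¹ •
        (((N : ℝ))⁻¹ • ∑ j ∈ Finset.range N, v (θhat n ω) (X j ω) • Φ (X j ω)) - s⁻¹ • a)‖}).toReal
      ≤ (P E0).toReal + (P E1).toReal + (P (⋃ i, E2 i)).toReal := by
    have h1 := ENNReal.toReal_mono (by
      exact ENNReal.add_ne_top.mpr ⟨ENNReal.add_ne_top.mpr
        ⟨measure_ne_top _ _, measure_ne_top _ _⟩, measure_ne_top _ _⟩) hP
    rw [ENNReal.toReal_add (ENNReal.add_ne_top.mpr ⟨measure_ne_top _ _, measure_ne_top _ _⟩)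
      (measure_ne_top _ _), ENNReal.toReal_add (measure_ne_top _ _) (measure_ne_top _ _)] at h1
    exact h1
  exact lt_of_le_of_lt htr (by linarith [h₀, hE1bd, hE2bd])
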